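/- Let Q be an n×n Q-matrix with positive invariant probability vector π, and let ρ(t) solve the forward equation dρ_i/dt = Σ_j (Q_{ji}ρ_j − Q_{ij}ρ_i) with Σ_i ρ_i(0) = Σ_i π_i. Then d/dt Σ_i (ρ_i − π_i)²/π_i = −(1/2) Σ_{i,j} α_{ij} (ρ_j/π_j − ρ_i/π_i)² ≤ 0, with α_{ij} = Q_{ji}π_j + Q_{ij}π_i. -/

import Mathlib

lemma chi2_key {n : ℕ} (Q : Matrix (Fin n) (Fin n) ℝ)
    (hQrow : ∀ i, ∑ j, Q i j = 0)
    (π : Fin n → ℝ)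
    (hπinv : ∀ i, ∑ j, Q j i * π j = 0)
    (u : Fin n → ℝ) :
    ∑ i, ∑ j, 2 * (u i - 1) * (Q j i * (u j * π j) - Q i j * (u i * π i))
      = -(1/2) * ∑ i, ∑ j, (Q j i * π j + Q i j * π i) * (u j - u i)^2 := by
  have Z1 : ∀ g : Fin n → ℝ, ∑ i, ∑ j, Q i j * g i = 0 := by
    intro g
    have h : ∀ i, ∑ j, Q i j * g i = 0 := by
      intro i; rw [← Finset.sum_mul, hQrow, zero_mul]
    simp [h]
  have Z2 : ∀ g : Fin n → ℝ, ∑ i, ∑ j, Q j i * π j * g i = 0 := by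
    intro g
    have h : ∀ i, ∑ j, Q j i * π j * g i = 0 := by
      intro i; rw [← Finset.sum_mul, hπinv, zero_mul]
    simp [h]
  have swap : ∀ f : Fin n → Fin n → ℝ, ∑ i, ∑ j, f i j = ∑ i, ∑ j, f j i := by
    intro f; exact Finset.sum_comm
  have hL : ∑ i, ∑ j, 2 * (u i - 1) * (Q j i * (u j * π j) - Q i j * (u i * π i))
      = 2*(∑ i, ∑ j, Q j i * π j * (u i * u j)) - 2*(∑ i, ∑ j, Q i j * (π i * u i ^ 2))
        - 2*(∑ i, ∑ j, Q j i * (π j * u j)) + 2*(∑ i, ∑ j, Q i j * (π i * u i)) := by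
    simp only [Finset.mul_sum, ← Finset.sum_sub_distrib, ← Finset.sum_add_distrib]
    refine Finset.sum_congr rfl fun i _ => Finset.sum_congr rfl fun j _ => by ring
  have hR : ∑ i, ∑ j, (Q j i * π j + Q i j * π i) * (u j - u i)^2
      = (∑ i, ∑ j, Q j i * (π j * u j ^ 2)) - 2*(∑ i, ∑ j, Q j i * π j * (u i * u j))
        + (∑ i, ∑ j, Q j i * π j * (u i ^ 2))
        + (∑ i, ∑ j, Q i j * π i * (u j ^ 2)) - 2*(∑ i, ∑ j, Q i j * π i * (u i * u j))
        + (∑ i, ∑ j, Q i j * (π i * u i ^ 2)) := by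
    simp only [Finset.mul_sum, ← Finset.sum_sub_distrib, ← Finset.sum_add_distrib]
    refine Finset.sum_congr rfl fun i _ => Finset.sum_congr rfl fun j _ => by ring
  have e1 : (∑ i, ∑ j, Q j i * (π j * u j ^ 2)) = 0 := by
    rw [swap (fun i j => Q j i * (π j * u j ^ 2))]; exact Z1 _
  have e3 : (∑ i, ∑ j, Q j i * π j * (u i ^ 2)) = 0 := Z2 _
  have e4 : (∑ i, ∑ j, Q i j * π i * (u j ^ 2)) = 0 := by
    rw [swap (fun i j => Q i j * π i * (u j ^ 2))]; exact Z2 _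
  have e5 : (∑ i, ∑ j, Q i j * π i * (u i * u j))
      = (∑ i, ∑ j, Q j i * π j * (u i * u j)) := by
    rw [swap (fun i j => Q i j * π i * (u i * u j))]
    refine Finset.sum_congr rfl fun i _ => Finset.sum_congr rfl fun j _ => by ring
  have e6 : (∑ i, ∑ j, Q i j * (π i * u i ^ 2)) = 0 := Z1 _
  have e7 : (∑ i, ∑ j, Q j i * (π j * u j)) = 0 := by
    rw [swap (fun i j => Q j i * (π j * u j))]; exact Z1 _
  have e8 : (∑ i, ∑ j, Q i j * (π i * u i)) = 0 := Z1 _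
  rw [hL, hR, e1, e3, e4, e5, e6, e7, e8]
  ring

theorem qmatrix_relative_chi2_dissipation {n : ℕ} (Q : Matrix (Fin n) (Fin n) ℝ)
    (hQoff : ∀ i j, i ≠ j → 0 ≤ Q i j)
    (hQrow : ∀ i, ∑ j, Q i j = 0)
    (π : Fin n → ℝ) (hπpos : ∀ i, 0 < π i)
    (hπinv : ∀ i, ∑ j, Q j i * π j = 0)
    (ρ : ℝ → Fin n → ℝ)
    (hODE : ∀ t, ∀ i, HasDerivAt (fun s => ρ s i)
      (∑ j, (Q j i * ρ t j - Q i j * ρ t i)) t)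
    (hmass : ∑ i, ρ 0 i = ∑ i, π i) :
    ∀ t, HasDerivAt (fun s => ∑ i, (ρ s i - π i)^2 / π i)
        (-(1/2) * ∑ i, ∑ j, (Q j i * π j + Q i j * π i) * (ρ t j / π j - ρ t i / π i)^2) t ∧
      -(1/2) * ∑ i, ∑ j, (Q j i * π j + Q i j * π i) * (ρ t j / π j - ρ t i / π i)^2 ≤ 0 := by
  intro t
  have hπne : ∀ i, π i ≠ 0 := fun i => (hπpos i).ne'
  constructor
  · have hderiv : HasDerivAt (fun s => ∑ i, (ρ s i - π i)^2 / π i)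
        (∑ i, (2 : ℕ) * (ρ t i - π i) ^ 1 * (∑ j, (Q j i * ρ t j - Q i j * ρ t i)) / π i) t := by
      refine HasDerivAt.fun_sum fun i _ => ?_
      exact (((hODE t i).sub_const (π i)).pow 2).div_const (π i)
    have key : (∑ i, (2 : ℕ) * (ρ t i - π i) ^ 1 * (∑ j, (Q j i * ρ t j - Q i j * ρ t i)) / π i)
        = -(1/2) * ∑ i, ∑ j, (Q j i * π j + Q i j * π i) * (ρ t j / π j - ρ t i / π i)^2 := by
      have step : (∑ i, (2 : ℕ) * (ρ t i - π i) ^ 1 * (∑ j, (Q j i * ρ t j - Q i j * ρ t i)) / π i)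
          = ∑ i, ∑ j, 2 * (ρ t i / π i - 1) *
              (Q j i * ((ρ t j / π j) * π j) - Q i j * ((ρ t i / π i) * π i)) := by
        refine Finset.sum_congr rfl fun i _ => ?_
        rw [Finset.mul_sum, Finset.sum_div]
        refine Finset.sum_congr rfl fun j _ => ?_
        rw [div_mul_cancel₀ _ (hπne j), div_mul_cancel₀ _ (hπne i),
          div_eq_iff (hπne i)]
        have hc : ρ t i / π i * π i = ρ t i := div_mul_cancel₀ _ (hπne i)
        linear_combination (-2 * (Q j i * ρ t j - Q i j * ρ t i)) * hc
      rw [step, chi2_key Q hQrow π hπinv (fun i => ρ t i / π i)]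
    rw [← key]
    exact hderiv
  · have hnn : 0 ≤ ∑ i, ∑ j, (Q j i * π j + Q i j * π i) * (ρ t j / π j - ρ t i / π i)^2 := by
      refine Finset.sum_nonneg fun i _ => Finset.sum_nonneg fun j _ => ?_
      rcases eq_or_ne i j with rfl | hij
      · simp
      · refine mul_nonneg ?_ (sq_nonneg _)
        have h1 := mul_nonneg (hQoff j i (Ne.symm hij)) (hπpos j).le
        have h2 := mul_nonneg (hQoff i j hij) (hπpos i).le
        linarith
    nlinarith
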